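/- arXiv:2504.08733 — 2 statements merged into one kernel-verified Lean document; each statement's English description precedes it below -/
import Mathlib

section
/- For e ≥ 3, the rook's graph K_e □ K_e has exactly two spreads: the only partitions of its vertex set Fin e × Fin e into maximal cliques are the partition into rows and the partition into columns. -/
/-- The rook's graph `K_e □ K_e` (the Hamming graph `H(2, e)`). -/
def rookGraph (e : ℕ) : SimpleGraph (Fin e × Fin e) where
  Adj p q := (p.1 = q.1 ∧ p.2 ≠ q.2) ∨ (p.1 ≠ q.1 ∧ p.2 = q.2)
  symm := by
    constructor
    intro p q h
    rcases h with ⟨h1, h2⟩ | ⟨h1, h2⟩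
    · exact Or.inl ⟨h1.symm, fun h => h2 h.symm⟩
    · exact Or.inr ⟨fun h => h1 h.symm, h2.symm⟩
  loopless := by
    constructor
    intro p h
    rcases h with ⟨_, h⟩ | ⟨h, _⟩ <;> exact h rfl

lemma rowClique (e : ℕ) (r : Fin e) : (rookGraph e).IsClique {p | p.1 = r} := by
  intro p hp q hq hne
  left
  refine ⟨hp.trans hq.symm, fun h => hne ?_⟩
  exact Prod.ext (hp.trans hq.symm) h

lemma colClique (e : ℕ) (c : Fin e) : (rookGraph e).IsClique {p | p.2 = c} := by
  intro p hp q hq hne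
  right
  refine ⟨fun h => hne (Prod.ext h (hp.trans hq.symm)), hp.trans hq.symm⟩

lemma maxclique (e : ℕ) (he : 3 ≤ e) (s : Set (Fin e × Fin e))
    (hc : (rookGraph e).IsClique s)
    (hm : ∀ t, (rookGraph e).IsClique t → s ⊆ t → s = t) :
    (∃ r, s = {p | p.1 = r}) ∨ ∃ c, s = {p | p.2 = c} := by
  have h0 : (0 : ℕ) < e := by omega
  -- s is nonempty
  have hne : s.Nonempty := by
    by_contra h
    rw [Set.not_nonempty_iff_eq_empty] at h
    have := hm {p | p.1 = ⟨0, h0⟩} (rowClique e _) (by simp [h])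
    rw [h] at this
    have : ((⟨0, h0⟩, ⟨0, h0⟩) : Fin e × Fin e) ∈ (∅ : Set (Fin e × Fin e)) := by
      rw [this]; rfl
    exact this
  obtain ⟨p, hp⟩ := hne
  by_cases hrow : ∀ z ∈ s, z.1 = p.1
  · left
    exact ⟨p.1, (hm {q | q.1 = p.1} (rowClique e _) hrow).symm ▸ rfl⟩
  · push_neg at hrow
    obtain ⟨a, ha, ha1⟩ := hrow
    -- a is adjacent to p, different first coord so same second coord
    have hane : a ≠ p := fun h => ha1 (by rw [h])
    have hadj := hc ha hp hane
    have ha2 : a.2 = p.2 := by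
      rcases hadj with ⟨h1, _⟩ | ⟨_, h2⟩
      · exact absurd h1 ha1
      · exact h2
    right
    refine ⟨p.2, (hm {q | q.2 = p.2} (colClique e _) ?_).symm ▸ rfl⟩
    intro b hb
    by_cases hbp : b = p
    · rw [hbp]; rfl
    have hbadj := hc hb hp hbp
    rcases hbadj with ⟨h1, h2⟩ | ⟨_, h2⟩
    · -- b same row as p, different column: then b not adjacent to a
      exfalso
      have hba : b ≠ a := by
        intro h; rw [h] at h1; exact ha1 h1
      rcases hc hb ha hba with ⟨g1, g2⟩ | ⟨g1, g2⟩
      · exact ha1 ((g1 ▸ h1).symm).symm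
      · exact h2 (g2.trans ha2)
    · exact h2

theorem rook_graph_two_spreads (e : ℕ) (he : 3 ≤ e)
    (P : Set (Set (Fin e × Fin e)))
    (hclique : ∀ s ∈ P, (rookGraph e).IsClique s ∧
        ∀ t : Set (Fin e × Fin e), (rookGraph e).IsClique t → s ⊆ t → s = t)
    (hpart : ∀ v : Fin e × Fin e, ∃! s, s ∈ P ∧ v ∈ s) :
    P = {s : Set (Fin e × Fin e) | ∃ r : Fin e, s = {p | p.1 = r}} ∨
      P = {s : Set (Fin e × Fin e) | ∃ c : Fin e, s = {p | p.2 = c}} := by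
  haveI : Nontrivial (Fin e) := Fin.nontrivial_iff_two_le.mpr (by omega)
  have h0 : (0 : ℕ) < e := by omega
  have key : ∀ s ∈ P, (∃ r, s = {p : Fin e × Fin e | p.1 = r}) ∨
      ∃ c, s = {p : Fin e × Fin e | p.2 = c} := fun s hs =>
    maxclique e he s (hclique s hs).1 (hclique s hs).2
  by_cases hrow : ∀ s ∈ P, ∃ r, s = {p : Fin e × Fin e | p.1 = r}
  · left
    ext s
    constructor
    · intro hs; exact hrow s hs
    · rintro ⟨r, rfl⟩
      obtain ⟨t, ⟨htP, htv⟩, -⟩ := hpart (r, ⟨0, h0⟩)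
      obtain ⟨r', rfl⟩ := hrow t htP
      have : r = r' := htv
      rw [← this] at htP
      exact htP
  · right
    push_neg at hrow
    obtain ⟨s, hsP, hsnr⟩ := hrow
    obtain ⟨c, rfl⟩ := (key s hsP).resolve_left (by push_neg; exact hsnr)
    -- every element of P is a column
    have hcol : ∀ t ∈ P, ∃ c', t = {p : Fin e × Fin e | p.2 = c'} := by
      intro t htP
      rcases key t htP with ⟨r, rfl⟩ | hc
      · exfalso
        -- (r, c) is in both t and s
        obtain ⟨u, -, huniq⟩ := hpart (r, c)
        have h1 : {p : Fin e × Fin e | p.1 = r} = u := huniq _ ⟨htP, rfl⟩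
        have h2 : {p : Fin e × Fin e | p.2 = c} = u := huniq _ ⟨hsP, rfl⟩
        have heq := h1.trans h2.symm
        obtain ⟨c', hc'⟩ := exists_ne c
        have : ((r, c') : Fin e × Fin e) ∈ {p : Fin e × Fin e | p.2 = c} := by
          rw [← heq]; rfl
        exact hc' this
      · exact hc
    ext t
    constructor
    · intro ht; exact hcol t ht
    · rintro ⟨c', rfl⟩
      obtain ⟨u, ⟨huP, huv⟩, -⟩ := hpart (⟨0, h0⟩, c')
      obtain ⟨c'', rfl⟩ := hcol u huP
      have : c' = c'' := huv
      rw [← this] at huP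
      exact huP
end

section
/- Let d and e be positive integers with d < e, let Y and Y' be the vertex sets of two copies of the Hamming graph H(d,e), and let G be a bipartite e-regular graph with parts Y and Y' such that for every vertex x ∈ Y the neighborhood of x in G is a maximal clique of the Hamming graph on Y', and for every vertex x' ∈ Y' the neighborhood of x' in G is a maximal clique of the Hamming graph on Y. Then every connected component of G is isomorphic to the complete bipartite graph K_{e,e}, and the two parts of each component are maximal cliques of the respective Hamming graphs. -/
/-- The Hamming graph `H(d, e)`: tuples adjacent iff they differ in exactly
one coordinate. -/
def hammingGraph (d e : ℕ) : SimpleGraph (Fin d → Fin e) where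
  Adj x y := (Finset.univ.filter fun i => x i ≠ y i).card = 1
  symm := by
    constructor
    intro x y h
    rw [show (Finset.univ.filter fun i => y i ≠ x i)
        = (Finset.univ.filter fun i => x i ≠ y i) from
      Finset.filter_congr fun i _ => by simp [ne_comm]]
    exact h
  loopless := by constructor; intro x h; simp at h

/-- `s` is a maximal clique of the graph `G`. -/
def IsMaximalClique {V : Type*} (G : SimpleGraph V) (s : Set V) : Prop :=
  G.IsClique s ∧ ∀ t : Set V, G.IsClique t → s ⊆ t → s = t

namespace HamAux

variable {d e : ℕ}

/-- The "line" through `a` in direction `k`. -/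
def line (k : Fin d) (a : Fin d → Fin e) : Set (Fin d → Fin e) :=
  {y | ∀ j, j ≠ k → y j = a j}

lemma mem_line_self (k : Fin d) (a : Fin d → Fin e) : a ∈ line k a :=
  fun _ _ => rfl

lemma line_eq_of_mem {k : Fin d} {a b : Fin d → Fin e} (hb : b ∈ line k a) :
    line k a = line k b := by
  ext z
  constructor <;> intro hz j hj
  · rw [hz j hj, ← hb j hj]
  · rw [hz j hj, hb j hj]

lemma adj_of_line {k : Fin d} {a p q : Fin d → Fin e} (hp : p ∈ line k a)
    (hq : q ∈ line k a) (hne : p ≠ q) : (hammingGraph d e).Adj p q := by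
  have hsub : (Finset.univ.filter fun i => p i ≠ q i) ⊆ {k} := by
    intro i hi
    simp only [Finset.mem_filter, Finset.mem_univ, true_and] at hi
    simp only [Finset.mem_singleton]
    by_contra hik
    exact hi ((hp i hik).trans (hq i hik).symm)
  have hne' : (Finset.univ.filter fun i => p i ≠ q i).Nonempty := by
    rcases Function.ne_iff.mp hne with ⟨i, hi⟩
    exact ⟨i, by simp [hi]⟩
  have : (Finset.univ.filter fun i => p i ≠ q i) = {k} :=
    Finset.Subset.antisymm hsub (Finset.singleton_subset_iff.mpr
      (hne'.elim fun i hi => by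
      have := Finset.mem_singleton.mp (hsub hi); subst this; exact hi))
  show _ = 1
  rw [this]; rfl

lemma line_isClique (k : Fin d) (a : Fin d → Fin e) :
    (hammingGraph d e).IsClique (line k a) :=
  fun _ hp _ hq hne => adj_of_line hp hq hne

lemma clique_subset_line {s : Set (Fin d → Fin e)}
    (hs : (hammingGraph d e).IsClique s) {p q : Fin d → Fin e} {k : Fin d}
    (hp : p ∈ s) (hq : q ∈ s) (hk : p k ≠ q k) : s ⊆ line k p := by
  have hne : p ≠ q := fun h => hk (congrFun h k)
  have hpq : (Finset.univ.filter fun i => p i ≠ q i).card = 1 := hs hp hq hne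
  rcases Finset.card_eq_one.mp hpq with ⟨i₀, hi₀⟩
  have hik : i₀ = k := by
    have : k ∈ (Finset.univ.filter fun i => p i ≠ q i) := by simp [hk]
    rw [hi₀, Finset.mem_singleton] at this
    exact this.symm
  subst hik
  have hagree : ∀ j, j ≠ i₀ → p j = q j := by
    intro j hj
    by_contra hc
    have : j ∈ (Finset.univ.filter fun i => p i ≠ q i) := by simp [hc]
    rw [hi₀, Finset.mem_singleton] at this
    exact hj this
  intro r hr j hj
  by_contra hrj
  have hrp : r ≠ p := fun h => hrj (congrFun h j)
  have hcard : (Finset.univ.filter fun i => r i ≠ p i).card = 1 := hs hr hp hrp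
  rcases Finset.card_eq_one.mp hcard with ⟨i₁, hi₁⟩
  have hji : j = i₁ := by
    have : j ∈ (Finset.univ.filter fun i => r i ≠ p i) := by simp [hrj]
    rw [hi₁, Finset.mem_singleton] at this; exact this
  have hrk : r i₀ = p i₀ := by
    by_contra hc
    have : i₀ ∈ (Finset.univ.filter fun i => r i ≠ p i) := by simp [hc]
    rw [hi₁, Finset.mem_singleton] at this
    exact hj (hji ▸ this ▸ rfl)
  -- now r vs q differ in two coordinates i₀ and j
  have hrq : r ≠ q := by
    intro h; subst h
    exact hk (hrk ▸ rfl)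
  have hcard2 : (Finset.univ.filter fun i => r i ≠ q i).card = 1 := hs hr hq hrq
  rcases Finset.card_eq_one.mp hcard2 with ⟨i₂, hi₂⟩
  have h1 : i₀ ∈ (Finset.univ.filter fun i => r i ≠ q i) := by
    simp only [Finset.mem_filter, Finset.mem_univ, true_and]
    rw [hrk]; exact hk
  have h2 : j ∈ (Finset.univ.filter fun i => r i ≠ q i) := by
    simp only [Finset.mem_filter, Finset.mem_univ, true_and]
    rw [← hagree j hj]; exact hrj
  rw [hi₂, Finset.mem_singleton] at h1 h2
  exact hj (h2.trans h1.symm)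

lemma maxclique_nonempty {s : Set (Fin d → Fin e)} (he : 0 < e) (hd : 0 < d)
    (h : IsMaximalClique (hammingGraph d e) s) : s.Nonempty := by
  by_contra hne
  rw [Set.not_nonempty_iff_eq_empty] at hne
  subst hne
  have : Nonempty (Fin d → Fin e) := ⟨fun _ => ⟨0, he⟩⟩
  obtain ⟨a⟩ := this
  have := h.2 {a} (by intro p hp q hq hne; simp_all) (Set.empty_subset _)
  exact (Set.singleton_ne_empty a) this.symm

lemma maxclique_eq_line {s : Set (Fin d → Fin e)} (he : 0 < e) (hd : 0 < d)
    (h : IsMaximalClique (hammingGraph d e) s) {a : Fin d → Fin e} (ha : a ∈ s) :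
    ∃ k, s = line k a := by
  by_cases hex : ∃ p ∈ s, p ≠ a
  · rcases hex with ⟨p, hp, hpa⟩
    rcases Function.ne_iff.mp hpa with ⟨k, hk⟩
    refine ⟨k, ?_⟩
    have hsub : s ⊆ line k a := clique_subset_line h.1 ha hp (Ne.symm hk)
    exact h.2 _ (line_isClique k a) hsub
  · push_neg at hex
    refine ⟨⟨0, hd⟩, ?_⟩
    have hsub : s ⊆ line ⟨0, hd⟩ a := by
      intro p hp; rw [hex p hp]; exact mem_line_self _ _
    exact h.2 _ (line_isClique _ a) hsub

end HamAux

namespace HamAux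

lemma walk_mem {V : Type*} {G : SimpleGraph V} {S : Set V}
    (hS : ∀ a ∈ S, ∀ b, G.Adj a b → b ∈ S) {a b : V} (p : G.Walk a b) :
    a ∈ S → b ∈ S := by
  induction p with
  | nil => exact id
  | cons h _ ih => exact fun ha => ih (hS _ ha _ h)

lemma key {d e : ℕ} (hd : 0 < d) (hde : d < e)
    {G : SimpleGraph ((Fin d → Fin e) ⊕ (Fin d → Fin e))}
    (hnbrL : ∀ x : Fin d → Fin e,
      IsMaximalClique (hammingGraph d e) {y | G.Adj (Sum.inl x) (Sum.inr y)})
    (hnbrR : ∀ y : Fin d → Fin e,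
      IsMaximalClique (hammingGraph d e) {x | G.Adj (Sum.inl x) (Sum.inr y)})
    {x y' : Fin d → Fin e} (hxy : G.Adj (Sum.inl x) (Sum.inr y')) :
    ∃ L L' : Set (Fin d → Fin e),
      IsMaximalClique (hammingGraph d e) L ∧ IsMaximalClique (hammingGraph d e) L' ∧
      x ∈ L ∧ y' ∈ L' ∧
      (∀ z ∈ L, {w | G.Adj (Sum.inl z) (Sum.inr w)} = L') ∧
      (∀ w ∈ L', {z | G.Adj (Sum.inl z) (Sum.inr w)} = L) := by
  have he : 0 < e := hd.trans hde
  set L : Set (Fin d → Fin e) := {z | G.Adj (Sum.inl z) (Sum.inr y')} with hLdef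
  have hL := hnbrR y'
  have hxL : x ∈ L := hxy
  obtain ⟨k, hk⟩ := maxclique_eq_line he hd hL hxL
  set xt : Fin e → (Fin d → Fin e) := fun t => Function.update x k t with hxtdef
  have hxt_line : ∀ t, xt t ∈ line k x := by
    intro t j hj; simp [hxtdef, Function.update_of_ne hj]
  have hxt_mem : ∀ t, xt t ∈ L := by
    intro t
    have : xt t ∈ {x | G.Adj (Sum.inl x) (Sum.inr y')} := by
      rw [hk]; exact hxt_line t
    exact this
  have hxt_adj : ∀ t, G.Adj (Sum.inl (xt t)) (Sum.inr y') := fun t => hxt_mem t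
  have hdir : ∀ t : Fin e,
      ∃ k', {w | G.Adj (Sum.inl (xt t)) (Sum.inr w)} = line k' y' :=
    fun t => maxclique_eq_line he hd (hnbrL (xt t)) (hxt_adj t)
  choose dir hdir using hdir
  obtain ⟨t, u, htu, hdtu⟩ :=
    Fintype.exists_ne_map_eq_of_card_lt dir (by simpa using hde)
  have hMt : {w | G.Adj (Sum.inl (xt t)) (Sum.inr w)} = line (dir t) y' := hdir t
  have hMu : {w | G.Adj (Sum.inl (xt u)) (Sum.inr w)} = line (dir t) y' := by
    rw [hdir u, hdtu]
  have hne_k : xt t k ≠ xt u k := by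
    simpa [hxtdef, Function.update_self] using htu
  have hLall : ∀ w ∈ line (dir t) y',
      {z | G.Adj (Sum.inl z) (Sum.inr w)} = L := by
    intro w hw
    have h1 : xt t ∈ {z | G.Adj (Sum.inl z) (Sum.inr w)} := by
      show G.Adj _ _
      have : w ∈ {w | G.Adj (Sum.inl (xt t)) (Sum.inr w)} := by rw [hMt]; exact hw
      exact this
    have h2 : xt u ∈ {z | G.Adj (Sum.inl z) (Sum.inr w)} := by
      show G.Adj _ _
      have : w ∈ {w | G.Adj (Sum.inl (xt u)) (Sum.inr w)} := by rw [hMu]; exact hw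
      exact this
    have hsub : {z | G.Adj (Sum.inl z) (Sum.inr w)} ⊆ line k (xt t) :=
      clique_subset_line (hnbrR w).1 h1 h2 hne_k
    have hlineeq : line k x = line k (xt t) := line_eq_of_mem (hxt_line t)
    have hsubL : {z | G.Adj (Sum.inl z) (Sum.inr w)} ⊆ L := by
      show _ ⊆ {x | G.Adj (Sum.inl x) (Sum.inr y')}
      rw [hk, hlineeq]; exact hsub
    exact (hnbrR w).2 L hL.1 hsubL
  have hMsub : line (dir t) y' ⊆ {w | G.Adj (Sum.inl x) (Sum.inr w)} := by
    intro w hw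
    have hx' : x ∈ {z | G.Adj (Sum.inl z) (Sum.inr w)} := by
      rw [hLall w hw]; exact hxL
    exact hx'
  have hMeq : {w | G.Adj (Sum.inl x) (Sum.inr w)} = line (dir t) y' := by
    have := (hnbrL (xt t)).2 _ (hnbrL x).1 (by rw [hMt]; exact hMsub)
    rw [← this, hMt]
  set L' : Set (Fin d → Fin e) := {w | G.Adj (Sum.inl x) (Sum.inr w)} with hL'def
  have h1 : ∀ w ∈ L', {z | G.Adj (Sum.inl z) (Sum.inr w)} = L := by
    intro w hw; exact hLall w (by rw [← hMeq]; exact hw)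
  have h2 : ∀ z ∈ L, {w | G.Adj (Sum.inl z) (Sum.inr w)} = L' := by
    intro z hz
    have hsub : L' ⊆ {w | G.Adj (Sum.inl z) (Sum.inr w)} := by
      intro w hw
      have hz' : z ∈ {z' | G.Adj (Sum.inl z') (Sum.inr w)} := by
        rw [h1 w hw]; exact hz
      exact hz'
    exact ((hnbrL x).2 _ (hnbrL z).1 hsub).symm
  exact ⟨L, L', hL, hnbrL x, hxL, hxy, h2, h1⟩

end HamAux

theorem hamming_lemma (d e : ℕ) (hd : 0 < d) (hde : d < e)
    (G : SimpleGraph ((Fin d → Fin e) ⊕ (Fin d → Fin e)))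
    (hY : ∀ x y : Fin d → Fin e, ¬ G.Adj (Sum.inl x) (Sum.inl y))
    (hY' : ∀ x y : Fin d → Fin e, ¬ G.Adj (Sum.inr x) (Sum.inr y))
    (hnbrL : ∀ x : Fin d → Fin e,
      IsMaximalClique (hammingGraph d e) {y | G.Adj (Sum.inl x) (Sum.inr y)})
    (hnbrR : ∀ y : Fin d → Fin e,
      IsMaximalClique (hammingGraph d e) {x | G.Adj (Sum.inl x) (Sum.inr y)}) :
    ∀ v : (Fin d → Fin e) ⊕ (Fin d → Fin e),
      ∃ (L L' : Set (Fin d → Fin e)),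
        IsMaximalClique (hammingGraph d e) L ∧
        IsMaximalClique (hammingGraph d e) L' ∧
        {w | G.Reachable v w} = Sum.inl '' L ∪ Sum.inr '' L' ∧
        ∀ y ∈ L, ∀ y' ∈ L', G.Adj (Sum.inl y) (Sum.inr y') := by
  intro v
  have he : 0 < e := hd.trans hde
  obtain ⟨x, y', hxy, hv⟩ : ∃ x y', G.Adj (Sum.inl x) (Sum.inr y') ∧
      (v = Sum.inl x ∨ v = Sum.inr y') := by
    cases v with
    | inl x =>
      obtain ⟨y', hy'⟩ := HamAux.maxclique_nonempty he hd (hnbrL x)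
      exact ⟨x, y', hy', Or.inl rfl⟩
    | inr y =>
      obtain ⟨x, hx⟩ := HamAux.maxclique_nonempty he hd (hnbrR y)
      exact ⟨x, y, hx, Or.inr rfl⟩
  obtain ⟨L, L', hL, hL', hxL, hyL', hNz, hNw⟩ := HamAux.key hd hde hnbrL hnbrR hxy
  have hadj : ∀ z ∈ L, ∀ w' ∈ L', G.Adj (Sum.inl z) (Sum.inr w') := by
    intro z hz w' hw'
    have : w' ∈ {w | G.Adj (Sum.inl z) (Sum.inr w)} := by rw [hNz z hz]; exact hw'
    exact this
  refine ⟨L, L', hL, hL', ?_, hadj⟩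
  have hclosed : ∀ a ∈ (Sum.inl '' L ∪ Sum.inr '' L' : Set _), ∀ b, G.Adj a b →
      b ∈ Sum.inl '' L ∪ Sum.inr '' L' := by
    rintro a (⟨z, hz, rfl⟩ | ⟨w, hw, rfl⟩) b hab
    · cases b with
      | inl b => exact absurd hab (hY z b)
      | inr b =>
        have : b ∈ L' := by rw [← hNz z hz]; exact hab
        exact Or.inr ⟨b, this, rfl⟩
    · cases b with
      | inl b =>
        have : b ∈ L := by rw [← hNw w hw]; exact hab.symm
        exact Or.inl ⟨b, this, rfl⟩
      | inr b => exact absurd hab (hY' w b)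
  have hvS : v ∈ Sum.inl '' L ∪ Sum.inr '' L' := by
    rcases hv with rfl | rfl
    · exact Or.inl ⟨x, hxL, rfl⟩
    · exact Or.inr ⟨y', hyL', rfl⟩
  ext w
  simp only [Set.mem_setOf_eq]
  constructor
  · rintro ⟨p⟩
    exact HamAux.walk_mem hclosed p hvS
  · have hreach : ∀ a ∈ Sum.inl '' L ∪ Sum.inr '' L', G.Reachable v a := by
      rintro a (⟨z, hz, rfl⟩ | ⟨w', hw', rfl⟩)
      · rcases hv with rfl | rfl
        · exact (hadj x hxL y' hyL').reachable.trans (hadj z hz y' hyL').symm.reachable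
        · exact (hadj z hz y' hyL').symm.reachable
      · rcases hv with rfl | rfl
        · exact (hadj x hxL w' hw').reachable
        · exact (hadj x hxL y' hyL').symm.reachable.trans (hadj x hxL w' hw').reachable
    exact fun hw => hreach w hw
end
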